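/- Let k be a complete non-archimedean field another with a(n), b(n) as in the rapid-growth construction, R = k[T,T⁻¹,Z] and R₀ the 𝒪_k-subalgebra generated by ϖT, ϖT⁻¹, ϖ⁻ⁿT^{a(n)}Z and ϖ⁻ⁿT^{-b(n)}Z (n ≥ 1). Then ϖ⁻ⁿZ ∈ R₀[T] and ϖ⁻ⁿZ ∈ R₀[T⁻¹] for all n ≥ 1. -/
import Mathlib


/-- STATEMENT 11: With rapidly growing sequences `a(n), b(n)` and `R₀ ⊆ k[T,T⁻¹,Z]` the
`𝒪_k`-subalgebra generated by `ϖT`, `ϖT⁻¹`, `ϖ⁻ⁿT^{a(n)}Z`, `ϖ⁻ⁿT^{-b(n)}Z` (`n ≥ 1`),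
for every `n ≥ 1` we have `ϖ⁻ⁿZ ∈ R₀[T]` and `ϖ⁻ⁿZ ∈ R₀[T⁻¹]`. Here `k[T,T⁻¹,Z]` is modelled as the monoid algebra on
`ℤ × ℕ`, with `T = X^{(1,0)}` and `Z = X^{(0,1)}`. -/
theorem Z_locally_zero
    (k : Type*) [NontriviallyNormedField k] [IsUltrametricDist k] [CompleteSpace k]
    (ϖ : k) (hϖ0 : 0 < ‖ϖ‖) (hϖ1 : ‖ϖ‖ < 1)
    (a b : ℕ → ℕ)
    (ha1 : a 1 = 1)
    (hpos : ∀ n : ℕ, 1 ≤ n → 0 < a n ∧ 0 < b n)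
    (hb : ∀ J : ℕ, 1 ≤ J →
      (∀ j : ℕ, 1 ≤ j → j < J → J ^ 2 + J * b j < b J) ∧
      (∀ i : ℕ, 1 ≤ i → i ≤ J → J ^ 2 + J * a i < b J))
    (ha : ∀ I : ℕ, 2 ≤ I →
      (∀ j : ℕ, 1 ≤ j → j < I → I ^ 2 + I * b j < a I) ∧
      (∀ i : ℕ, 1 ≤ i → i < I → I ^ 2 + I * a i < a I))
    (Z : AddMonoidAlgebra k (ℤ × ℕ))
    (hZ : Z = AddMonoidAlgebra.single ((0 : ℤ), (1 : ℕ)) (1 : k))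
    (R₀ : Subring (AddMonoidAlgebra k (ℤ × ℕ)))
    (hR₀ : R₀ = Subring.closure
      ((algebraMap k (AddMonoidAlgebra k (ℤ × ℕ))) '' {c : k | ‖c‖ ≤ 1} ∪
        {ϖ • AddMonoidAlgebra.single ((1 : ℤ), (0 : ℕ)) (1 : k),
         ϖ • AddMonoidAlgebra.single ((-1 : ℤ), (0 : ℕ)) (1 : k)} ∪
        (Set.range fun n : ℕ =>
          (ϖ⁻¹) ^ (n + 1) •
            AddMonoidAlgebra.single (((a (n + 1) : ℤ)), (1 : ℕ)) (1 : k)) ∪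
        (Set.range fun n : ℕ =>
          (ϖ⁻¹) ^ (n + 1) •
            AddMonoidAlgebra.single ((-(b (n + 1) : ℤ)), (1 : ℕ)) (1 : k)))) :
    ∀ n : ℕ, 1 ≤ n →
      (ϖ⁻¹) ^ n • Z ∈ Subring.closure
        ((R₀ : Set (AddMonoidAlgebra k (ℤ × ℕ))) ∪
          {AddMonoidAlgebra.single ((1 : ℤ), (0 : ℕ)) (1 : k)}) ∧
      (ϖ⁻¹) ^ n • Z ∈ Subring.closure
        ((R₀ : Set (AddMonoidAlgebra k (ℤ × ℕ))) ∪
          {AddMonoidAlgebra.single ((-1 : ℤ), (0 : ℕ)) (1 : k)}) := by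

  intro n hn
  obtain ⟨m, rfl⟩ : ∃ m, n = m + 1 := ⟨n - 1, by omega⟩
  subst hZ hR₀
  constructor
  · -- use ϖ⁻ⁿ T^{-b n} Z  times  T^{b n}
    have h1 : (ϖ⁻¹) ^ (m + 1) •
        AddMonoidAlgebra.single ((-(b (m + 1) : ℤ)), (1 : ℕ)) (1 : k) ∈
        Subring.closure
          ((Subring.closure
            ((algebraMap k (AddMonoidAlgebra k (ℤ × ℕ))) '' {c : k | ‖c‖ ≤ 1} ∪
              {ϖ • AddMonoidAlgebra.single ((1 : ℤ), (0 : ℕ)) (1 : k),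
               ϖ • AddMonoidAlgebra.single ((-1 : ℤ), (0 : ℕ)) (1 : k)} ∪
              (Set.range fun n : ℕ =>
                (ϖ⁻¹) ^ (n + 1) •
                  AddMonoidAlgebra.single (((a (n + 1) : ℤ)), (1 : ℕ)) (1 : k)) ∪
              (Set.range fun n : ℕ =>
                (ϖ⁻¹) ^ (n + 1) •
                  AddMonoidAlgebra.single ((-(b (n + 1) : ℤ)), (1 : ℕ)) (1 : k))) :
            Set (AddMonoidAlgebra k (ℤ × ℕ))) ∪
            {AddMonoidAlgebra.single ((1 : ℤ), (0 : ℕ)) (1 : k)}) := by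
      apply Subring.subset_closure
      left
      apply Subring.subset_closure
      right
      exact ⟨m, rfl⟩
    have h2 : (AddMonoidAlgebra.single ((1 : ℤ), (0 : ℕ)) (1 : k)) ^ (b (m + 1)) ∈
        Subring.closure
          ((Subring.closure
            ((algebraMap k (AddMonoidAlgebra k (ℤ × ℕ))) '' {c : k | ‖c‖ ≤ 1} ∪
              {ϖ • AddMonoidAlgebra.single ((1 : ℤ), (0 : ℕ)) (1 : k),
               ϖ • AddMonoidAlgebra.single ((-1 : ℤ), (0 : ℕ)) (1 : k)} ∪
              (Set.range fun n : ℕ =>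
                (ϖ⁻¹) ^ (n + 1) •
                  AddMonoidAlgebra.single (((a (n + 1) : ℤ)), (1 : ℕ)) (1 : k)) ∪
              (Set.range fun n : ℕ =>
                (ϖ⁻¹) ^ (n + 1) •
                  AddMonoidAlgebra.single ((-(b (n + 1) : ℤ)), (1 : ℕ)) (1 : k))) :
            Set (AddMonoidAlgebra k (ℤ × ℕ))) ∪
            {AddMonoidAlgebra.single ((1 : ℤ), (0 : ℕ)) (1 : k)}) :=
      by
      apply pow_mem
      apply Subring.subset_closure
      exact Or.inr rfl
    have key := mul_mem h1 h2
    have calc1 : ((ϖ⁻¹) ^ (m + 1) •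
        AddMonoidAlgebra.single ((-(b (m + 1) : ℤ)), (1 : ℕ)) (1 : k)) *
        (AddMonoidAlgebra.single ((1 : ℤ), (0 : ℕ)) (1 : k)) ^ (b (m + 1)) =
        (ϖ⁻¹) ^ (m + 1) • AddMonoidAlgebra.single ((0 : ℤ), (1 : ℕ)) (1 : k) := by
      rw [AddMonoidAlgebra.single_pow, smul_mul_assoc, AddMonoidAlgebra.single_mul_single]
      simp [Prod.ext_iff]
    rwa [calc1] at key
  · -- use ϖ⁻ⁿ T^{a n} Z  times  (T⁻¹)^{a n}
    have h1 : (ϖ⁻¹) ^ (m + 1) •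
        AddMonoidAlgebra.single (((a (m + 1) : ℤ)), (1 : ℕ)) (1 : k) ∈
        Subring.closure
          ((Subring.closure
            ((algebraMap k (AddMonoidAlgebra k (ℤ × ℕ))) '' {c : k | ‖c‖ ≤ 1} ∪
              {ϖ • AddMonoidAlgebra.single ((1 : ℤ), (0 : ℕ)) (1 : k),
               ϖ • AddMonoidAlgebra.single ((-1 : ℤ), (0 : ℕ)) (1 : k)} ∪
              (Set.range fun n : ℕ =>
                (ϖ⁻¹) ^ (n + 1) •
                  AddMonoidAlgebra.single (((a (n + 1) : ℤ)), (1 : ℕ)) (1 : k)) ∪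
              (Set.range fun n : ℕ =>
                (ϖ⁻¹) ^ (n + 1) •
                  AddMonoidAlgebra.single ((-(b (n + 1) : ℤ)), (1 : ℕ)) (1 : k))) :
            Set (AddMonoidAlgebra k (ℤ × ℕ))) ∪
            {AddMonoidAlgebra.single ((-1 : ℤ), (0 : ℕ)) (1 : k)}) := by
      apply Subring.subset_closure
      left
      apply Subring.subset_closure
      left; right
      exact ⟨m, rfl⟩
    have h2 : (AddMonoidAlgebra.single ((-1 : ℤ), (0 : ℕ)) (1 : k)) ^ (a (m + 1)) ∈
        Subring.closure
          ((Subring.closure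
            ((algebraMap k (AddMonoidAlgebra k (ℤ × ℕ))) '' {c : k | ‖c‖ ≤ 1} ∪
              {ϖ • AddMonoidAlgebra.single ((1 : ℤ), (0 : ℕ)) (1 : k),
               ϖ • AddMonoidAlgebra.single ((-1 : ℤ), (0 : ℕ)) (1 : k)} ∪
              (Set.range fun n : ℕ =>
                (ϖ⁻¹) ^ (n + 1) •
                  AddMonoidAlgebra.single (((a (n + 1) : ℤ)), (1 : ℕ)) (1 : k)) ∪
              (Set.range fun n : ℕ =>
                (ϖ⁻¹) ^ (n + 1) •
                  AddMonoidAlgebra.single ((-(b (n + 1) : ℤ)), (1 : ℕ)) (1 : k))) :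
            Set (AddMonoidAlgebra k (ℤ × ℕ))) ∪
            {AddMonoidAlgebra.single ((-1 : ℤ), (0 : ℕ)) (1 : k)}) :=
      by
      apply pow_mem
      apply Subring.subset_closure
      exact Or.inr rfl
    have key := mul_mem h1 h2
    have calc1 : ((ϖ⁻¹) ^ (m + 1) •
        AddMonoidAlgebra.single (((a (m + 1) : ℤ)), (1 : ℕ)) (1 : k)) *
        (AddMonoidAlgebra.single ((-1 : ℤ), (0 : ℕ)) (1 : k)) ^ (a (m + 1)) =
        (ϖ⁻¹) ^ (m + 1) • AddMonoidAlgebra.single ((0 : ℤ), (1 : ℕ)) (1 : k) := by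
      rw [AddMonoidAlgebra.single_pow, smul_mul_assoc, AddMonoidAlgebra.single_mul_single]
      simp [Prod.ext_iff]
    rwa [calc1] at key
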